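/- Let X be a set and T an overlap-free subset of ⟨X⟩\{1}. Then an element u of ⟨X : i(T)⟩ is invertible (has a two-sided inverse) if and only if u lies in the submonoid of ⟨X : i(T)⟩ generated by the images of the elements of T together with the elements i(w) for w ∈ T. -/

import Mathlib

namespace AdjoinInverses

variable {X : Type*}

/-- The embedding of the free monoid on `X` into the free monoid on `X ⊕ S`. -/
def emb (S : Set (FreeMonoid X)) : FreeMonoid X →* FreeMonoid (X ⊕ S) :=
  FreeMonoid.map Sum.inl

/-- The generator `i(w)` corresponding to `w ∈ S`. -/
def igen (S : Set (FreeMonoid X)) (w : S) : FreeMonoid (X ⊕ S) :=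
  FreeMonoid.of (Sum.inr w)

/-- The defining relations `w ⬝ i(w) = 1` and `i(w) ⬝ w = 1` for `w ∈ S`. -/
inductive InvRel (S : Set (FreeMonoid X)) : FreeMonoid (X ⊕ S) → FreeMonoid (X ⊕ S) → Prop
  | mul_inv (w : S) : InvRel S (emb S w.1 * igen S w) 1
  | inv_mul (w : S) : InvRel S (igen S w * emb S w.1) 1

/-- The congruence generated by the defining relations. -/
def invCon (S : Set (FreeMonoid X)) : Con (FreeMonoid (X ⊕ S)) := conGen (InvRel S)

/-- The monoid `⟨X : i(S)⟩` obtained from the free monoid on `X` by universally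
adjoining a two-sided inverse to each element of `S`. -/
def AdjInv (S : Set (FreeMonoid X)) : Type _ := (invCon S).Quotient

instance (S : Set (FreeMonoid X)) : Monoid (AdjInv S) := Con.monoid _

/-- The natural homomorphism `⟨X⟩ → ⟨X : i(S)⟩`. -/
def natHom (S : Set (FreeMonoid X)) : FreeMonoid X →* AdjInv S :=
  ((invCon S).mk').comp (emb S)

/-- The adjoined inverse `i(w)`, as an element of `⟨X : i(S)⟩`. -/
def invElt (S : Set (FreeMonoid X)) (w : S) : AdjInv S :=
  (invCon S).mk' (igen S w)

/-- `S` and `S'` are inverse-equivalent: each element of `S'` becomes invertible in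
`⟨X : i(S)⟩` and each element of `S` becomes invertible in `⟨X : i(S')⟩`. -/
def InvEquiv (S S' : Set (FreeMonoid X)) : Prop :=
  (∀ w ∈ S', IsUnit (natHom S w)) ∧ ∀ w ∈ S, IsUnit (natHom S' w)

/-- Two (nonidentity) elements of the free monoid overlap: one can be written `a*b`
and the other `b*c` with `b ≠ 1` and at most one of `a`, `c` equal to `1`. -/
def Overlap (u v : FreeMonoid X) : Prop :=
  ∃ a b c : FreeMonoid X, b ≠ 1 ∧ (a ≠ 1 ∨ c ≠ 1) ∧ u = a * b ∧ v = b * c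

/-- A set `T` is overlap-free if no pair of elements of `T` (distinct or not) overlap. -/
def OverlapFree (T : Set (FreeMonoid X)) : Prop :=
  ∀ u ∈ T, ∀ v ∈ T, ¬ Overlap u v


section Aux

open FreeMonoid List

variable {T : Set (FreeMonoid X)}

/-- letters of a word over `X`, viewed in `X ⊕ T`. -/
def embL (T : Set (FreeMonoid X)) (w : List X) : List (X ⊕ T) := w.map Sum.inl

lemma embL_append (l1 l2 : List X) : embL T (l1 ++ l2) = embL T l1 ++ embL T l2 :=
  List.map_append

@[simp] lemma embL_nil : embL T ([] : List X) = [] := rfl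

lemma not_inr_mem_embL (v : T) (w : List X) : Sum.inr v ∉ embL T w := by
  simp [embL]

lemma embL_injective : Function.Injective (embL T) :=
  List.map_injective_iff.2 Sum.inl_injective

/-- the underlying list of letters of an element of `T`. -/
def wl (w : T) : List X := FreeMonoid.toList w.1

lemma wl_injective {v w : T} (h : wl v = wl w) : v = w :=
  Subtype.ext (FreeMonoid.toList.injective h)

def ruleA (w : T) : List (X ⊕ T) := embL T (wl w) ++ [Sum.inr w]
def ruleB (w : T) : List (X ⊕ T) := Sum.inr w :: embL T (wl w)

def IsRule (T : Set (FreeMonoid X)) (r : List (X ⊕ T)) : Prop :=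
  ∃ w : T, r = ruleA w ∨ r = ruleB w

def Normal (T : Set (FreeMonoid X)) (s : List (X ⊕ T)) : Prop :=
  ∀ r, IsRule T r → ¬ r <:+: s

lemma ruleA_ne_nil (w : T) : ruleA w ≠ [] := by simp [ruleA]
lemma ruleB_ne_nil (w : T) : ruleB w ≠ [] := by simp [ruleB]

lemma rule_ne_nil {r : List (X ⊕ T)} (h : IsRule T r) : r ≠ [] := by
  obtain ⟨w, h | h⟩ := h <;> subst h
  · exact ruleA_ne_nil w
  · exact ruleB_ne_nil w

lemma getLast?_append_right {α} {l r : List α} (h : r ≠ []) :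
    (l ++ r).getLast? = r.getLast? := by
  rw [List.getLast?_append, List.getLast?_eq_getLast h]
  simp

lemma getLast?_ruleA (w : T) : (ruleA w).getLast? = some (Sum.inr w) := by
  simp [ruleA]

lemma getLast?_ruleB (hne : ∀ w : T, wl w ≠ []) (w : T) :
    ∃ x : X, (ruleB w).getLast? = some (Sum.inl x) := by
  have h : embL T (wl w) ≠ [] := by simpa [embL] using hne w
  have h2 : (ruleB w).getLast? = (embL T (wl w)).getLast? := by
    rw [ruleB, ← List.singleton_append]
    exact getLast?_append_right h
  rw [h2]
  obtain ⟨c, hc⟩ : ∃ c, (embL T (wl w)).getLast? = some c := by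
    rw [List.getLast?_eq_getLast h]; exact ⟨_, rfl⟩
  have hcm : c ∈ embL T (wl w) := by
    rw [List.getLast?_eq_getLast h] at hc
    exact (Option.some.inj hc) ▸ List.getLast_mem h
  rw [embL, List.mem_map] at hcm
  obtain ⟨x, _, hx⟩ := hcm
  exact ⟨x, by rw [hc, ← hx]⟩

lemma rule_eq_of_suffix (hne : ∀ w : T, wl w ≠ []) {r₁ r₂ : List (X ⊕ T)}
    (h₁ : IsRule T r₁) (h₂ : IsRule T r₂) (h : r₁ <:+ r₂) : r₁ = r₂ := by
  have hlast : r₁.getLast? = r₂.getLast? := by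
    obtain ⟨p, rfl⟩ := h
    exact (getLast?_append_right (rule_ne_nil h₁)).symm
  obtain ⟨v, hv | hv⟩ := h₁ <;> obtain ⟨w, hw | hw⟩ := h₂ <;> subst hv hw
  · rw [getLast?_ruleA, getLast?_ruleA] at hlast
    have : v = w := by simpa using hlast
    rw [this]
  · obtain ⟨x, hx⟩ := getLast?_ruleB hne w
    rw [getLast?_ruleA, hx] at hlast
    simp at hlast
  · obtain ⟨x, hx⟩ := getLast?_ruleB hne v
    rw [hx, getLast?_ruleA] at hlast
    simp at hlast
  · rcases eq_or_lt_of_le h.length_le with heq | hlt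
    · exact h.eq_of_length heq
    · exfalso
      have hsuf2 : embL T (wl w) <:+ ruleB w := ⟨[Sum.inr w], rfl⟩
      rcases List.suffix_or_suffix_of_suffix h hsuf2 with h' | h'
      · exact not_inr_mem_embL v (wl w) (h'.mem (by simp [ruleB]))
      · have h1 : (wl w).length ≤ (wl v).length + 1 := by
          simpa [ruleB, embL] using h'.length_le
        have h2 : (wl v).length + 1 < (wl w).length + 1 := by
          simpa [ruleB, embL] using hlt
        have heq : (embL T (wl w)).length = (ruleB v).length := by
          simp [ruleB, embL]; omega
        have := h'.eq_of_length heq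
        exact not_inr_mem_embL v (wl w) (by rw [this]; simp [ruleB])

lemma pop_unique (hne : ∀ w : T, wl w ≠ []) {p₁ r₁ p₂ r₂ : List (X ⊕ T)}
    (h₁ : IsRule T r₁) (h₂ : IsRule T r₂) (e : p₁ ++ r₁ = p₂ ++ r₂) :
    p₁ = p₂ ∧ r₁ = r₂ := by
  have s₁ : r₁ <:+ p₂ ++ r₂ := e ▸ List.suffix_append p₁ r₁
  have s₂ : r₂ <:+ p₂ ++ r₂ := List.suffix_append _ _
  have hrr : r₁ = r₂ := by
    rcases List.suffix_or_suffix_of_suffix s₁ s₂ with h | h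
    · exact rule_eq_of_suffix hne h₁ h₂ h
    · exact (rule_eq_of_suffix hne h₂ h₁ h).symm
  subst hrr
  exact ⟨List.append_cancel_right e, rfl⟩

open Classical in
noncomputable def push1 (T : Set (FreeMonoid X)) (t : List (X ⊕ T)) (a : X ⊕ T) :
    List (X ⊕ T) :=
  if h : ∃ p, ∃ r, IsRule T r ∧ t ++ [a] = p ++ r then h.choose else t ++ [a]

lemma push1_pop (hne : ∀ w : T, wl w ≠ []) {t p r : List (X ⊕ T)} {a : X ⊕ T}
    (hr : IsRule T r) (e : t ++ [a] = p ++ r) : push1 T t a = p := by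
  have h : ∃ p, ∃ r, IsRule T r ∧ t ++ [a] = p ++ r := ⟨p, r, hr, e⟩
  rw [push1]
  rw [dif_pos h]
  obtain ⟨r', hr', e'⟩ := h.choose_spec
  exact (pop_unique hne hr' hr (e'.symm.trans e)).1

lemma push1_push {t : List (X ⊕ T)} {a : X ⊕ T}
    (h : ¬ ∃ p, ∃ r, IsRule T r ∧ t ++ [a] = p ++ r) : push1 T t a = t ++ [a] := by
  rw [push1]
  rw [dif_neg h]

lemma Normal.infix {s t : List (X ⊕ T)} (h : Normal T s) (hinf : t <:+: s) :
    Normal T t := fun r hr h' => h r hr (h'.trans hinf)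

lemma normal_nil : Normal T [] := by
  rintro r hr ⟨p, q, e⟩
  apply rule_ne_nil hr
  rcases List.append_eq_nil_iff.1 e with ⟨e1, e2⟩
  exact (List.append_eq_nil_iff.1 e1).2

lemma push1_normal (hne : ∀ w : T, wl w ≠ []) {t : List (X ⊕ T)} {a : X ⊕ T}
    (h : Normal T t) : Normal T (push1 T t a) := by
  by_cases hpop : ∃ p, ∃ r, IsRule T r ∧ t ++ [a] = p ++ r
  · obtain ⟨p, r, hr, e⟩ := hpop
    rw [push1_pop hne hr e]
    have hlen : p.length ≤ t.length := by
      have := congrArg List.length e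
      simp at this
      have := List.length_pos_iff.2 (rule_ne_nil hr)
      omega
    have hp : p <+: t := by
      have h1 : p <+: t ++ [a] := ⟨r, e.symm⟩
      rcases List.prefix_or_prefix_of_prefix h1 (List.prefix_append t [a]) with h' | h'
      · exact h'
      · have := h'.eq_of_length (le_antisymm h'.length_le hlen)
        rw [← this]
    exact h.infix hp.isInfix
  · rw [push1_push hpop]
    rintro r hr ⟨p, q, e⟩
    rcases List.eq_nil_or_concat q with rfl | ⟨q', b, rfl⟩
    · exact hpop ⟨p, r, hr, by rw [← e]; simp⟩
    · have e' : (p ++ r ++ q') ++ [b] = t ++ [a] := by rw [← e]; simp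
      have := (List.append_inj' e' rfl).1
      exact h r hr ⟨p, q', this⟩

noncomputable def scan (T : Set (FreeMonoid X)) (t l : List (X ⊕ T)) : List (X ⊕ T) :=
  l.foldl (push1 T) t

@[simp] lemma scan_nil (t : List (X ⊕ T)) : scan T t [] = t := rfl

lemma scan_cons (t : List (X ⊕ T)) (a : X ⊕ T) (l : List (X ⊕ T)) :
    scan T t (a :: l) = scan T (push1 T t a) l := rfl

lemma scan_append (t l₁ l₂ : List (X ⊕ T)) :
    scan T t (l₁ ++ l₂) = scan T (scan T t l₁) l₂ :=
  List.foldl_append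

lemma scan_normal (hne : ∀ w : T, wl w ≠ []) {t : List (X ⊕ T)} (l : List (X ⊕ T))
    (h : Normal T t) : Normal T (scan T t l) := by
  induction l generalizing t with
  | nil => exact h
  | cons a l ih => exact ih (push1_normal hne h)

lemma scan_of_normal (hne : ∀ w : T, wl w ≠ []) :
    ∀ (l t : List (X ⊕ T)), Normal T (t ++ l) → scan T t l = t ++ l := by
  intro l
  induction l with
  | nil => intro t _; simp
  | cons a l ih =>
    intro t h
    have hnp : ¬ ∃ p, ∃ r, IsRule T r ∧ t ++ [a] = p ++ r := by
      rintro ⟨p, r, hr, e⟩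
      exact h r hr ⟨p, l, by rw [← e]; simp⟩

    rw [scan_cons, push1_push hnp, ih (t ++ [a]) (by simpa using h)]
    simp

lemma pop_analysis (hne : ∀ w : T, wl w ≠ []) {t : List (X ⊕ T)} {w1 : List X} {x : X}
    {p r : List (X ⊕ T)} (hr : IsRule T r)
    (e : t ++ embL T w1 ++ [Sum.inl x] = p ++ r) :
    ∃ (v : T) (v1 : List X), wl v = v1 ++ w1 ++ [x] ∧ t = p ++ Sum.inr v :: embL T v1 := by
  obtain ⟨v, hv | hv⟩ := hr
  · exfalso
    subst hv
    have hlast : (t ++ embL T w1 ++ [Sum.inl x]).getLast? = some (Sum.inl x) := by simp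
    rw [e, getLast?_append_right (ruleA_ne_nil v), getLast?_ruleA] at hlast
    simp at hlast
  · subst hv
    have eL : t ++ embL T (w1 ++ [x]) = p ++ ruleB v := by
      rw [embL_append, ← List.append_assoc]
      simpa [embL] using e
    have sL : embL T (w1 ++ [x]) <:+ p ++ ruleB v := eL ▸ List.suffix_append t _
    have sR : ruleB v <:+ p ++ ruleB v := List.suffix_append _ _
    have hLs : embL T (w1 ++ [x]) <:+ embL T (wl v) := by
      rcases List.suffix_or_suffix_of_suffix sL sR with h | h
      · have sE : embL T (wl v) <:+ ruleB v := ⟨[Sum.inr v], rfl⟩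
        rcases List.suffix_or_suffix_of_suffix h sE with h' | h'
        · exact h'
        · -- embL (wl v) <:+ embL (w1++[x]) and embL (w1++[x]) <:+ ruleB v
          have l1 : (wl v).length ≤ w1.length + 1 := by
            have := h'.length_le
            simp only [embL, ruleB, List.length_map, List.length_append,
              List.length_cons, List.length_nil] at this ⊢
            omega
          have l2 : w1.length + 1 ≤ (wl v).length + 1 := by
            have := h.length_le
            simp only [embL, ruleB, List.length_map, List.length_append,
              List.length_cons, List.length_nil] at this ⊢
            omega
          have l3 : w1.length + 1 = (wl v).length ∨ w1.length + 1 = (wl v).length + 1 := by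
            omega
          rcases l3 with heq | heq
          · have : embL T (wl v) = embL T (w1 ++ [x]) := by
              apply h'.eq_of_length
              simp only [embL, List.length_map, List.length_append, List.length_cons,
                List.length_nil]
              omega
            rw [this]
          · exfalso
            have : embL T (w1 ++ [x]) = ruleB v := by
              apply h.eq_of_length
              simp only [embL, ruleB, List.length_map, List.length_append,
                List.length_cons, List.length_nil]
              omega
            exact not_inr_mem_embL v (w1 ++ [x]) (by rw [this]; simp [ruleB])
      · exfalso
        exact not_inr_mem_embL v (w1 ++ [x]) (h.mem (by simp [ruleB]))
    obtain ⟨s, hs⟩ := hLs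
    have hsl : s = embL T ((wl v).take s.length) := by
      have h1 : s = (embL T (wl v)).take s.length := by
        rw [← hs, List.take_left]
      conv_lhs => rw [h1]
      rw [embL, embL, List.map_take]
    set v1 := (wl v).take s.length with hv1def
    have hwv : wl v = v1 ++ w1 ++ [x] := by
      apply embL_injective (T := T)
      rw [List.append_assoc, embL_append, ← hsl, hs]
    refine ⟨v, v1, hwv, ?_⟩
    have eR : p ++ ruleB v = (p ++ Sum.inr v :: embL T v1) ++ embL T (w1 ++ [x]) := by
      rw [ruleB, hwv]
      simp [embL_append, embL]
    rw [eR] at eL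
    exact List.append_cancel_right eL

lemma pop_analysis_inr (hne : ∀ w : T, wl w ≠ []) {t p r : List (X ⊕ T)} {w : T}
    (hr : IsRule T r) (e : t ++ [Sum.inr w] = p ++ r) :
    t = p ++ embL T (wl w) := by
  obtain ⟨v, hv | hv⟩ := hr
  · subst hv
    have hlast : (t ++ [Sum.inr w]).getLast? = some (Sum.inr w) := by simp
    rw [e, getLast?_append_right (ruleA_ne_nil v), getLast?_ruleA] at hlast
    have hvw : v = w := by simpa using hlast
    subst hvw
    rw [ruleA, ← List.append_assoc] at e
    exact List.append_inj' e rfl |>.1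
  · exfalso
    subst hv
    obtain ⟨y, hy⟩ := getLast?_ruleB hne v
    have hlast : (t ++ [Sum.inr w]).getLast? = some (Sum.inr w) := by simp
    rw [e, getLast?_append_right (ruleB_ne_nil v), hy] at hlast
    simp at hlast

lemma ofList_eq_one_iff {l : List X} : FreeMonoid.ofList l = 1 ↔ l = [] := by
  constructor
  · intro h
    have := congrArg FreeMonoid.toList h
    rwa [toList_ofList, toList_one] at this
  · rintro rfl; exact ofList_nil

lemma overlap_of (hT : OverlapFree T) {v w : T} {v1 b w2 : List X}
    (hv : wl v = v1 ++ b) (hw : wl w = b ++ w2) (hb : b ≠ []) : v1 = [] ∧ w2 = [] := by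
  by_contra hcon
  apply hT v.1 v.2 w.1 w.2
  refine ⟨ofList v1, ofList b, ofList w2, ?_, ?_, ?_, ?_⟩
  · rw [Ne, ofList_eq_one_iff]; exact hb
  · rcases not_and_or.mp hcon with h | h
    · exact Or.inl (by rwa [Ne, ofList_eq_one_iff])
    · exact Or.inr (by rwa [Ne, ofList_eq_one_iff])
  · rw [← ofList_append, ← hv, wl, ofList_toList]
  · rw [← ofList_append, ← hw, wl, ofList_toList]

lemma scanW (hT : OverlapFree T) (hne : ∀ w : T, wl w ≠ []) :
    ∀ (w2 w1 : List X) (t : List (X ⊕ T)) (w : T), wl w = w1 ++ w2 →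
    Normal T (t ++ embL T w1) →
    (∃ t0, t = t0 ++ [Sum.inr w] ∧ scan T (t ++ embL T w1) (embL T w2) = t0) ∨
    ((¬ ∃ t0, t = t0 ++ [Sum.inr w]) ∧ scan T (t ++ embL T w1) (embL T w2) = t ++ embL T (w1 ++ w2)) := by
  intro w2
  induction w2 with
  | nil =>
    intro w1 t w hw hnorm
    right
    constructor
    · rintro ⟨t0, rfl⟩
      exact hnorm (ruleB w) ⟨w, Or.inr rfl⟩ ⟨t0, [], by simp [ruleB, hw, embL]⟩
    · simp [embL]
  | cons x w2' ih =>
    intro w1 t w hw hnorm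
    have hscan : scan T (t ++ embL T w1) (embL T (x :: w2'))
        = scan T (push1 T (t ++ embL T w1) (Sum.inl x)) (embL T w2') := rfl
    by_cases hpop : ∃ p, ∃ r, IsRule T r ∧ (t ++ embL T w1) ++ [Sum.inl x] = p ++ r
    · obtain ⟨p, r, hr, e⟩ := hpop
      obtain ⟨v, v1, hv, ht⟩ := pop_analysis hne hr e
      have hov := overlap_of hT (v1 := v1) (b := w1 ++ [x]) (w2 := w2')
        (by rw [hv]; simp) (by rw [hw]; simp) (by simp)
      obtain ⟨hv1, hw2⟩ := hov
      subst hv1; subst hw2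
      have hvw : v = w := wl_injective (by rw [hv, hw]; simp)
      subst hvw
      have hp : push1 T (t ++ embL T w1) (Sum.inl x) = p := push1_pop hne hr e
      left
      refine ⟨p, ?_, ?_⟩
      · rw [ht]; simp [embL]
      · rw [hscan, hp]; simp [embL]
    · have hp : push1 T (t ++ embL T w1) (Sum.inl x) = (t ++ embL T w1) ++ [Sum.inl x] :=
        push1_push hpop
      have hstack : (t ++ embL T w1) ++ [Sum.inl x] = t ++ embL T (w1 ++ [x]) := by
        simp [embL_append, embL]
      have hnorm' : Normal T (t ++ embL T (w1 ++ [x])) := by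
        have := push1_normal hne (t := t ++ embL T w1) (a := Sum.inl x) hnorm
        rwa [hp, hstack] at this
      have hIH := ih (w1 ++ [x]) t w (by rw [hw]; simp) hnorm'
      rw [hscan, hp, hstack]
      rcases hIH with ⟨t0, h1, h2⟩ | ⟨h1, h2⟩
      · exact Or.inl ⟨t0, h1, h2⟩
      · refine Or.inr ⟨h1, ?_⟩
        rw [h2]
        simp

lemma scan_ruleA (hT : OverlapFree T) (hne : ∀ w : T, wl w ≠ []) {t : List (X ⊕ T)}
    (ht : Normal T t) (w : T) : scan T t (ruleA w) = t := by
  rw [ruleA, scan_append]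
  have h0 : Normal T (t ++ embL T []) := by simpa using ht
  have hW := scanW hT hne (wl w) [] t w (by simp) h0
  simp only [embL_nil, List.append_nil, List.nil_append] at hW
  rcases hW with ⟨t0, h1, h2⟩ | ⟨h1, h2⟩
  · rw [h2]
    have hnp : ¬ ∃ p, ∃ r, IsRule T r ∧ t0 ++ [Sum.inr w] = p ++ r := by
      rintro ⟨p, r, hr, e⟩
      have := pop_analysis_inr hne hr e
      apply ht (ruleA w) ⟨w, Or.inl rfl⟩
      refine ⟨p, [], ?_⟩
      rw [h1, this, ruleA]
      simp
    show push1 T t0 (Sum.inr w) = t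
    rw [push1_push hnp, ← h1]
  · rw [h2]
    show push1 T (t ++ embL T (wl w)) (Sum.inr w) = t
    exact push1_pop hne ⟨w, Or.inl rfl⟩ (by rw [ruleA, List.append_assoc])

lemma scan_ruleB (hT : OverlapFree T) (hne : ∀ w : T, wl w ≠ []) {t : List (X ⊕ T)}
    (ht : Normal T t) (w : T) : scan T t (ruleB w) = t := by
  have hcons : ruleB w = [Sum.inr w] ++ embL T (wl w) := rfl
  rw [hcons, scan_append]
  show scan T (push1 T t (Sum.inr w)) (embL T (wl w)) = t
  by_cases hpop : ∃ p, ∃ r, IsRule T r ∧ t ++ [Sum.inr w] = p ++ r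
  · obtain ⟨p, r, hr, e⟩ := hpop
    have htp : t = p ++ embL T (wl w) := pop_analysis_inr hne hr e
    rw [push1_pop hne hr e]
    have hpn : Normal T (p ++ embL T []) := by
      simp only [embL_nil, List.append_nil]
      exact ht.infix ⟨[], embL T (wl w), by rw [htp]; simp⟩
    have hW := scanW hT hne (wl w) [] p w (by simp) hpn
    simp only [embL_nil, List.append_nil, List.nil_append] at hW
    rcases hW with ⟨p0, h1, h2⟩ | ⟨h1, h2⟩
    · exfalso
      apply ht (ruleB w) ⟨w, Or.inr rfl⟩
      exact ⟨p0, [], by rw [htp, h1, ruleB]; simp [embL]⟩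
    · rw [h2, ← htp]
  · rw [push1_push hpop]
    have hnorm' : Normal T ((t ++ [Sum.inr w]) ++ embL T []) := by
      simp only [embL_nil, List.append_nil]
      have := push1_normal hne (t := t) (a := Sum.inr w) ht
      rwa [push1_push hpop] at this
    have hW := scanW hT hne (wl w) [] (t ++ [Sum.inr w]) w (by simp) hnorm'
    simp only [embL_nil, List.append_nil, List.nil_append] at hW
    rcases hW with ⟨t0, h1, h2⟩ | ⟨h1, h2⟩
    · rw [h2]
      exact (List.append_cancel_right h1).symm
    · exact absurd ⟨t, rfl⟩ h1

lemma ofList_embL (l : List X) : FreeMonoid.ofList (embL T l) = emb T (FreeMonoid.ofList l) := by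
  apply FreeMonoid.toList.injective
  rw [toList_ofList]
  show embL T l = FreeMonoid.toList ((FreeMonoid.map Sum.inl) (FreeMonoid.ofList l))
  rw [toList_map, toList_ofList]
  rfl

lemma invCon_rule {r : List (X ⊕ T)} (hr : IsRule T r) :
    invCon T (FreeMonoid.ofList r) 1 := by
  obtain ⟨w, hv | hv⟩ := hr <;> subst hv
  · have h : FreeMonoid.ofList (ruleA w) = emb T w.1 * igen T w := by
      rw [ruleA, ofList_append, ofList_embL, ofList_singleton, wl, ofList_toList]
      rfl
    rw [h]
    exact ConGen.Rel.of _ _ (InvRel.mul_inv w)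
  · have h : FreeMonoid.ofList (ruleB w) = igen T w * emb T w.1 := by
      rw [ruleB, ← List.singleton_append, ofList_append, ofList_embL, ofList_singleton,
        wl, ofList_toList]
      rfl
    rw [h]
    exact ConGen.Rel.of _ _ (InvRel.inv_mul w)

lemma con_scan (hne : ∀ w : T, wl w ≠ []) :
    ∀ (l t : List (X ⊕ T)), invCon T (FreeMonoid.ofList (t ++ l)) (FreeMonoid.ofList (scan T t l)) := by
  intro l
  induction l with
  | nil => intro t; simp only [List.append_nil, scan_nil]; exact (invCon T).refl _
  | cons a l ih =>
    intro t
    by_cases hpop : ∃ p, ∃ r, IsRule T r ∧ t ++ [a] = p ++ r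
    · obtain ⟨p, r, hr, e⟩ := hpop
      rw [scan_cons, push1_pop hne hr e]
      refine (invCon T).trans ?_ (ih p)
      have h1 : t ++ a :: l = (p ++ r) ++ l := by rw [← e]; simp
      rw [h1, ofList_append, ofList_append, ofList_append]
      have hmul := (invCon T).mul
        ((invCon T).mul ((invCon T).refl (FreeMonoid.ofList p)) (invCon_rule hr))
        ((invCon T).refl (FreeMonoid.ofList l))
      simpa [mul_one] using hmul
    · rw [scan_cons, push1_push hpop]
      have h1 : t ++ a :: l = (t ++ [a]) ++ l := by simp
      rw [h1]
      exact ih _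

lemma scan_invariant (hT : OverlapFree T) (hne : ∀ w : T, wl w ≠ [])
    {x y : FreeMonoid (X ⊕ T)} (h : invCon T x y) :
    ∀ t, Normal T t → scan T t (FreeMonoid.toList x) = scan T t (FreeMonoid.toList y) := by
  have h' : ConGen.Rel (InvRel T) x y := h
  clear h
  induction h' with
  | of x y hxy =>
    intro t ht
    cases hxy with
    | mul_inv w =>
      have h1 : FreeMonoid.toList (emb T w.1) = embL T (wl w) := toList_map Sum.inl w.1
      have h2 : FreeMonoid.toList (igen T w) = [Sum.inr w] := toList_of _
      have hx : FreeMonoid.toList (emb T w.1 * igen T w) = ruleA w := by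
        rw [toList_mul, h1, h2]; rfl
      rw [hx, toList_one, scan_nil, scan_ruleA hT hne ht w]
    | inv_mul w =>
      have h1 : FreeMonoid.toList (emb T w.1) = embL T (wl w) := toList_map Sum.inl w.1
      have h2 : FreeMonoid.toList (igen T w) = [Sum.inr w] := toList_of _
      have hx : FreeMonoid.toList (igen T w * emb T w.1) = ruleB w := by
        rw [toList_mul, h1, h2]; rfl
      rw [hx, toList_one, scan_nil, scan_ruleB hT hne ht w]
  | refl x => intro t _; rfl
  | symm h ih => intro t ht; exact (ih t ht).symm
  | trans h1 h2 ih1 ih2 => intro t ht; exact (ih1 t ht).trans (ih2 t ht)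
  | mul h1 h2 ih1 ih2 =>
    intro t ht
    rw [toList_mul, toList_mul, scan_append, scan_append, ih1 t ht,
      ih2 _ (by rw [← ih1 t ht]; exact scan_normal hne _ ht)]

lemma nf_eq_of_con (hT : OverlapFree T) (hne : ∀ w : T, wl w ≠ [])
    {x y : FreeMonoid (X ⊕ T)} (h : invCon T x y) :
    scan T [] (FreeMonoid.toList x) = scan T [] (FreeMonoid.toList y) :=
  scan_invariant hT hne h [] normal_nil

lemma mk_nf (hne : ∀ w : T, wl w ≠ []) (x : FreeMonoid (X ⊕ T)) :
    (invCon T).mk' (FreeMonoid.ofList (scan T [] (FreeMonoid.toList x))) = (invCon T).mk' x := by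
  have h := con_scan hne (FreeMonoid.toList x) []
  rw [List.nil_append, ofList_toList] at h
  exact ((Con.eq _).2 h).symm

lemma natHom_mul_invElt (w : T) : natHom T w.1 * invElt T w = 1 := by
  have h : invCon T (emb T w.1 * igen T w) 1 := ConGen.Rel.of _ _ (InvRel.mul_inv w)
  calc natHom T w.1 * invElt T w = (show AdjInv T from (invCon T).mk' (emb T w.1 * igen T w)) := by
        rw [map_mul]; rfl
    _ = (show AdjInv T from (invCon T).mk' 1) := (Con.eq _).2 h
    _ = 1 := map_one _

lemma invElt_mul_natHom (w : T) : invElt T w * natHom T w.1 = 1 := by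
  have h : invCon T (igen T w * emb T w.1) 1 := ConGen.Rel.of _ _ (InvRel.inv_mul w)
  calc invElt T w * natHom T w.1 = (show AdjInv T from (invCon T).mk' (igen T w * emb T w.1)) := by
        rw [map_mul]; rfl
    _ = (show AdjInv T from (invCon T).mk' 1) := (Con.eq _).2 h
    _ = 1 := map_one _

lemma isUnit_natHom (w : T) : IsUnit (natHom T w.1) :=
  ⟨⟨natHom T w.1, invElt T w, natHom_mul_invElt w, invElt_mul_natHom w⟩, rfl⟩

lemma isUnit_invElt (w : T) : IsUnit (invElt T w) :=
  ⟨⟨invElt T w, natHom T w.1, invElt_mul_natHom w, natHom_mul_invElt w⟩, rfl⟩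

lemma unit_cancel {M : Type*} [Monoid M] {u z : M} (hu : IsUnit u) (h : u = u * z) : z = 1 := by
  obtain ⟨v, rfl⟩ := hu
  calc z = ↑v⁻¹ * (↑v * z) := by rw [← mul_assoc, v.inv_mul, one_mul]
    _ = ↑v⁻¹ * ↑v := by rw [← h]
    _ = 1 := v.inv_mul

/-- `mk'` viewed as landing in `AdjInv T`. -/
def mkW (T : Set (FreeMonoid X)) : FreeMonoid (X ⊕ T) →* AdjInv T := (invCon T).mk'

lemma mkW_eq_iff {x y : FreeMonoid (X ⊕ T)} : mkW T x = mkW T y ↔ invCon T x y := Con.eq _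

lemma mkW_nf (hne : ∀ w : T, wl w ≠ []) (x : FreeMonoid (X ⊕ T)) :
    mkW T (FreeMonoid.ofList (scan T [] (FreeMonoid.toList x))) = mkW T x := mk_nf hne x

lemma mkW_surjective : Function.Surjective (mkW T) := Con.mk'_surjective

lemma eq_of_middle {α : Type*} {c : α} :
    ∀ (X1 : List α) {X2 Y1 Y2 : List α}, X1 ++ c :: Y1 = X2 ++ c :: Y2 →
      c ∉ X1 → c ∉ X2 → X1 = X2 ∧ Y1 = Y2 := by
  intro X1
  induction X1 with
  | nil =>
    intro X2 Y1 Y2 h h1 h2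
    cases X2 with
    | nil => simpa using h
    | cons b X2' =>
      exfalso
      rw [List.nil_append] at h
      injection h with hc ht
      exact h2 (hc ▸ List.mem_cons_self (a := b) (l := X2'))
  | cons a X1' ih =>
    intro X2 Y1 Y2 h h1 h2
    cases X2 with
    | nil =>
      exfalso
      rw [List.nil_append] at h
      injection h with hc ht
      exact h1 (hc ▸ List.mem_cons_self (a := a) (l := X1'))
    | cons b X2' =>
      injection h with hc ht
      subst hc
      obtain ⟨e1, e2⟩ := ih ht (fun hm => h1 (List.mem_cons_of_mem _ hm))
        (fun hm => h2 (List.mem_cons_of_mem _ hm))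
      exact ⟨by rw [e1], e2⟩

@[simp] lemma countP_embL (l : List X) :
    (embL T l).countP (fun c => c.isRight) = 0 := by
  rw [List.countP_eq_zero]
  intro a ha
  rw [embL, List.mem_map] at ha
  obtain ⟨x, _, rfl⟩ := ha
  simp

lemma not_mem_inr_of_countP {l : List (X ⊕ T)}
    (h : l.countP (fun c => c.isRight) = 0) (v : T) : Sum.inr v ∉ l := by
  rw [List.countP_eq_zero] at h
  intro hm
  simpa using h _ hm

lemma normal_mid (hne : ∀ w : T, wl w ≠ []) {w : T} {w1 w2 : List X}
    (hw : wl w = w1 ++ w2) (hw1 : w1 ≠ []) (hw2 : w2 ≠ []) :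
    Normal T (embL T w2 ++ Sum.inr w :: embL T w1) := by
  rintro r hr ⟨p, q, e⟩
  have hlen1 : w1.length < (wl w).length := by
    rw [hw]
    have := List.length_pos_iff.2 hw2
    simp only [List.length_append]
    omega
  have hlen2 : w2.length < (wl w).length := by
    rw [hw]
    have := List.length_pos_iff.2 hw1
    simp only [List.length_append]
    omega
  obtain ⟨v, hv | hv⟩ := hr <;> subst hv
  · -- ruleA v
    have hm : Sum.inr v ∈ embL T w2 ++ Sum.inr w :: embL T w1 := by
      rw [← e]; simp [ruleA]
    have hvw : v = w := by
      rcases List.mem_append.1 hm with h | h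
      · exact absurd h (not_inr_mem_embL v w2)
      · rcases List.mem_cons.1 h with h | h
        · exact Sum.inr.inj h
        · exact absurd h (not_inr_mem_embL v w1)
    subst hvw
    have hcount := congrArg (List.countP (fun (c : X ⊕ T) => c.isRight)) e
    simp [ruleA, List.countP_append, List.countP_cons] at hcount
    have hcp : p.countP (fun (c : X ⊕ T) => c.isRight) = 0 := by omega
    have hcq : q.countP (fun (c : X ⊕ T) => c.isRight) = 0 := by omega
    have e' : (p ++ embL T (wl v)) ++ Sum.inr v :: q = embL T w2 ++ Sum.inr v :: embL T w1 := by
      rw [← e, ruleA]; simp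
    have hnm1 : Sum.inr v ∉ p ++ embL T (wl v) := by
      rw [List.mem_append]
      rintro (h | h)
      · exact not_mem_inr_of_countP hcp v h
      · exact not_inr_mem_embL v (wl v) h
    obtain ⟨e1, _⟩ := eq_of_middle _ e' hnm1 (not_inr_mem_embL v w2)
    have := congrArg List.length e1
    simp only [embL, List.length_append, List.length_map] at this
    omega
  · -- ruleB v
    have hm : Sum.inr v ∈ embL T w2 ++ Sum.inr w :: embL T w1 := by
      rw [← e]; simp [ruleB]
    have hvw : v = w := by
      rcases List.mem_append.1 hm with h | h
      · exact absurd h (not_inr_mem_embL v w2)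
      · rcases List.mem_cons.1 h with h | h
        · exact Sum.inr.inj h
        · exact absurd h (not_inr_mem_embL v w1)
    subst hvw
    have hcount := congrArg (List.countP (fun (c : X ⊕ T) => c.isRight)) e
    simp [ruleB, List.countP_append, List.countP_cons] at hcount
    have hcp : p.countP (fun (c : X ⊕ T) => c.isRight) = 0 := by omega
    have e' : p ++ Sum.inr v :: (embL T (wl v) ++ q) = embL T w2 ++ Sum.inr v :: embL T w1 := by
      rw [← e, ruleB]; simp
    obtain ⟨_, e2⟩ := eq_of_middle _ e' (not_mem_inr_of_countP hcp v) (not_inr_mem_embL v w2)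
    have := congrArg List.length e2
    simp only [embL, List.length_append, List.length_map] at this
    omega

lemma contra_word (hT : OverlapFree T) (hne : ∀ w : T, wl w ≠ []) {w : T} {w1 w2 : List X}
    (hw : wl w = w1 ++ w2) (hw1 : w1 ≠ []) (hw2 : w2 ≠ [])
    (h : natHom T (FreeMonoid.ofList w2) * invElt T w * natHom T (FreeMonoid.ofList w1) = 1) :
    False := by
  set W : List (X ⊕ T) := embL T w2 ++ Sum.inr w :: embL T w1 with hW
  have hofW : FreeMonoid.ofList W = emb T (FreeMonoid.ofList w2) * igen T w * emb T (FreeMonoid.ofList w1) := by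
    rw [hW, show (Sum.inr w :: embL T w1 : List (X ⊕ T)) = [Sum.inr w] ++ embL T w1 from rfl,
      ofList_append, ofList_append, ofList_embL, ofList_embL, ofList_singleton]
    exact (mul_assoc _ _ _).symm
  have hmk : (invCon T).mk' (FreeMonoid.ofList W) = (invCon T).mk' 1 := by
    rw [map_one, hofW]
    calc (show AdjInv T from (invCon T).mk' (emb T (FreeMonoid.ofList w2) * igen T w * emb T (FreeMonoid.ofList w1)))
        = natHom T (FreeMonoid.ofList w2) * invElt T w * natHom T (FreeMonoid.ofList w1) := by
          rw [map_mul, map_mul]; rfl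
      _ = 1 := h
  have hcon : invCon T (FreeMonoid.ofList W) 1 := (Con.eq _).1 hmk
  have hnf := nf_eq_of_con hT hne hcon
  rw [toList_ofList, toList_one, scan_nil] at hnf
  have hWnorm : Normal T W := normal_mid hne hw hw1 hw2
  have hWval : scan T [] W = W := by
    have h5 := scan_of_normal hne W [] (by simpa using hWnorm)
    rwa [List.nil_append] at h5
  rw [hWval] at hnf
  have : Sum.inr w ∈ W := by rw [hW]; simp
  rw [hnf] at this
  simp at this

lemma straddle {α : Type*} {a b p r q : List α} (e : a ++ b = p ++ r ++ q) (hr : r ≠ []) :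
    (r <:+: a) ∨ (r <:+: b) ∨
    ∃ r1 r2, r = r1 ++ r2 ∧ r1 ≠ [] ∧ r2 ≠ [] ∧ a = p ++ r1 ∧ b = r2 ++ q := by
  rcases le_or_gt a.length p.length with hap | hpa
  · -- a is a prefix of p
    right; left
    have h1 : a <+: p := by
      have ha : a <+: p ++ (r ++ q) := ⟨b, by rw [← List.append_assoc, ← e]⟩
      have hp : p <+: p ++ (r ++ q) := List.prefix_append _ _
      rcases List.prefix_or_prefix_of_prefix ha hp with h | h
      · exact h
      · rw [h.eq_of_length (le_antisymm h.length_le hap)]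
    obtain ⟨p', rfl⟩ := h1
    refine ⟨p', q, ?_⟩
    have e' : (a ++ p') ++ (r ++ q) = a ++ b := by rw [e]; simp
    rw [List.append_assoc] at e'
    have := List.append_cancel_left e'
    rw [← this]; simp
  · rcases le_or_gt (p.length + r.length) a.length with har | hra
    · -- r sits inside a
      left
      have h1 : p ++ r <+: a := by
        have hpr : p ++ r <+: a ++ b := ⟨q, by rw [e]⟩
        have ha : a <+: a ++ b := List.prefix_append _ _
        rcases List.prefix_or_prefix_of_prefix hpr ha with h | h
        · exact h
        · rw [← h.eq_of_length (le_antisymm h.length_le (by simpa using har))]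
      obtain ⟨s, hs⟩ := h1
      exact ⟨p, s, by rw [← hs]⟩
    · -- straddle
      right; right
      have hp : p <+: a := by
        have hp' : p <+: a ++ b := ⟨r ++ q, by rw [e]; simp⟩
        have ha : a <+: a ++ b := List.prefix_append _ _
        rcases List.prefix_or_prefix_of_prefix hp' ha with h | h
        · exact h
        · exfalso; have := h.length_le; omega
      obtain ⟨a', ha'⟩ := hp
      have ea : a' ++ b = r ++ q := by
        apply List.append_cancel_left (as := p)
        rw [← List.append_assoc, ha', e, List.append_assoc]
      have haen : a'.length < r.length := by
        have := congrArg List.length ha'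
        simp only [List.length_append] at this
        omega
      have ha'r : a' <+: r := by
        have h1 : a' <+: r ++ q := ⟨b, ea⟩
        have h2 : r <+: r ++ q := List.prefix_append _ _
        rcases List.prefix_or_prefix_of_prefix h1 h2 with h | h
        · exact h
        · exfalso; have := h.length_le; omega
      obtain ⟨r2, hr2⟩ := ha'r
      refine ⟨a', r2, hr2.symm, ?_, ?_, ha'.symm, ?_⟩
      · intro hh
        subst hh
        have := congrArg List.length ha'
        simp only [List.length_append, List.length_nil] at this
        omega
      · intro hh
        subst hh
        have := congrArg List.length hr2
        simp only [List.length_append, List.length_nil] at this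
        omega
      · have : a' ++ b = a' ++ (r2 ++ q) := by rw [ea, ← hr2]; simp
        exact List.append_cancel_left this

lemma ruleA_split {r1 r2 : List (X ⊕ T)} {w : T} (h : r1 ++ r2 = ruleA w)
    (h1 : r1 ≠ []) (h2 : r2 ≠ []) :
    ∃ w1 w2 : List X, wl w = w1 ++ w2 ∧ w1 ≠ [] ∧
      r1 = embL T w1 ∧ r2 = embL T w2 ++ [Sum.inr w] := by
  have hlen : r1.length ≤ (wl w).length := by
    have hl := congrArg List.length h
    simp only [ruleA, embL, List.length_append, List.length_map, List.length_cons,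
      List.length_nil] at hl
    have := List.length_pos_iff.2 h2
    omega
  have hr1 : r1 = embL T ((wl w).take r1.length) := by
    have ht : r1 = (ruleA w).take r1.length := by
      conv_lhs => rw [← List.take_left (l₁ := r1) (l₂ := r2)]
      rw [h]
    conv_lhs => rw [ht, ruleA, List.take_append_of_le_length (by simpa [embL] using hlen)]
    rw [embL, embL, List.map_take]
  refine ⟨(wl w).take r1.length, (wl w).drop r1.length, (List.take_append_drop _ _).symm,
    ?_, hr1, ?_⟩
  · intro hh
    apply h1
    rw [hr1, hh]
    rfl
  · have hw12 : embL T (wl w) = r1 ++ embL T ((wl w).drop r1.length) := by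
      conv_lhs => rw [← List.take_append_drop r1.length (wl w)]
      rw [embL_append, ← hr1]
    have hsplit : r1 ++ r2 = r1 ++ (embL T ((wl w).drop r1.length) ++ [Sum.inr w]) := by
      rw [h, ruleA, hw12, List.append_assoc]
    exact List.append_cancel_left hsplit

lemma ruleB_split {r1 r2 : List (X ⊕ T)} {w : T} (h : r1 ++ r2 = ruleB w)
    (h1 : r1 ≠ []) (h2 : r2 ≠ []) :
    ∃ w1 w2 : List X, wl w = w1 ++ w2 ∧ w2 ≠ [] ∧
      r1 = Sum.inr w :: embL T w1 ∧ r2 = embL T w2 := by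
  cases r1 with
  | nil => exact absurd rfl h1
  | cons c r1' =>
    rw [ruleB, List.cons_append] at h
    injection h with hc ht
    subst hc
    have hlen : r1'.length ≤ (wl w).length := by
      have hl := congrArg List.length ht
      simp only [embL, List.length_append, List.length_map] at hl
      omega
    have hr1' : r1' = embL T ((wl w).take r1'.length) := by
      have h3 : r1' = (embL T (wl w)).take r1'.length := by
        conv_lhs => rw [← List.take_left (l₁ := r1') (l₂ := r2)]
        rw [ht]
      conv_lhs => rw [h3]
      rw [embL, embL, List.map_take]
    have hw12 : embL T (wl w) = r1' ++ embL T ((wl w).drop r1'.length) := by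
      conv_lhs => rw [← List.take_append_drop r1'.length (wl w)]
      rw [embL_append, ← hr1']
    have h4 : r2 = embL T ((wl w).drop r1'.length) :=
      List.append_cancel_left (ht.trans hw12)
    refine ⟨(wl w).take r1'.length, (wl w).drop r1'.length, (List.take_append_drop _ _).symm,
      ?_, by conv_lhs => rw [hr1'], h4⟩
    intro hh
    apply h2
    rw [h4, hh]
    rfl

lemma unit_mem (hT : OverlapFree T) (hne : ∀ w : T, wl w ≠ []) :
    ∀ (n : ℕ) (a : List (X ⊕ T)), a.length ≤ n → Normal T a →
    IsUnit (mkW T (FreeMonoid.ofList a)) →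
    mkW T (FreeMonoid.ofList a) ∈
      Submonoid.closure (natHom T '' T ∪ Set.range (invElt T)) := by
  intro n
  induction n with
  | zero =>
    intro a ha _ _
    have : a = [] := List.eq_nil_of_length_eq_zero (Nat.le_zero.1 ha)
    subst this
    rw [ofList_nil, map_one]
    exact one_mem _
  | succ n ih =>
    intro a hlen hnorm hu
    rcases eq_or_ne a [] with rfl | hane
    · rw [ofList_nil, map_one]
      exact one_mem _
    obtain ⟨U, hU⟩ := hu
    obtain ⟨y, hy⟩ := mkW_surjective (T := T) (↑U⁻¹)
    set b := scan T [] (FreeMonoid.toList y) with hb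
    have hbnorm : Normal T b := scan_normal hne _ normal_nil
    have hmkb : mkW T (FreeMonoid.ofList b) = ↑U⁻¹ := by
      rw [hb, mkW_nf hne, hy]
    have hone : mkW T (FreeMonoid.ofList (a ++ b)) = 1 := by
      rw [ofList_append, map_mul, hmkb, ← hU, U.mul_inv]
    have hcon : invCon T (FreeMonoid.ofList (a ++ b)) 1 := by
      apply mkW_eq_iff.1
      rw [hone, map_one]
    have hscan0 : scan T [] (a ++ b) = [] := by
      have h5 := nf_eq_of_con hT hne hcon
      rwa [toList_ofList, toList_one, scan_nil] at h5
    have hnn : ¬ Normal T (a ++ b) := by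
      intro h
      have h6 := scan_of_normal hne (a ++ b) [] (by simpa using h)
      rw [hscan0, List.nil_append] at h6
      exact hane (List.append_eq_nil_iff.1 h6.symm).1
    rw [Normal] at hnn
    push_neg at hnn
    obtain ⟨r, hr, hinf⟩ := hnn
    obtain ⟨p, q, he⟩ := hinf
    rcases straddle he.symm (rule_ne_nil hr) with hcase | hcase | hstr
    · exact absurd hcase (hnorm r hr)
    · exact absurd hcase (hbnorm r hr)
    obtain ⟨r1, r2, hr12, hr1ne, hr2ne, haeq, hbeq⟩ := hstr
    have hpnorm : Normal T p := hnorm.infix ⟨[], r1, by rw [haeq]; simp⟩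
    obtain ⟨w, hw | hw⟩ := hr
    · -- r = ruleA w
      obtain ⟨w1, w2, hw12, hw1ne, hrr1, hrr2⟩ :=
        ruleA_split (show r1 ++ r2 = ruleA w by rw [← hr12, ← hw]) hr1ne hr2ne
      have hadec : a = p ++ embL T w1 := by rw [haeq, hrr1]
      have hu1 : mkW T (FreeMonoid.ofList a)
          = mkW T (FreeMonoid.ofList p) * natHom T (FreeMonoid.ofList w1) := by
        rw [hadec, ofList_append, map_mul, ofList_embL]
        rfl
      rcases eq_or_ne w2 [] with rfl | hw2ne
      · -- block case: w1 = wl w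
        have hw1 : FreeMonoid.ofList w1 = w.1 := by
          rw [List.append_nil] at hw12
          rw [← hw12, wl, ofList_toList]
        have hkey : mkW T (FreeMonoid.ofList p)
            = mkW T (FreeMonoid.ofList a) * invElt T w := by
          rw [hu1, hw1, mul_assoc, natHom_mul_invElt, mul_one]
        have hup : IsUnit (mkW T (FreeMonoid.ofList p)) := by
          rw [hkey, ← hU]
          exact (Units.isUnit U).mul (isUnit_invElt w)
        have hplen : p.length ≤ n := by
          have h7 := congrArg List.length hadec
          simp only [List.length_append, embL, List.length_map] at h7
          have h8 : 0 < w1.length := List.length_pos_iff.2 hw1ne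
          omega
        have hmem := ih p hplen hpnorm hup
        rw [hu1, hw1]
        exact mul_mem hmem (Submonoid.subset_closure (Or.inl ⟨w.1, w.2, rfl⟩))
      · -- partial case: contradiction
        exfalso
        have hnat : natHom T (FreeMonoid.ofList w1) * natHom T (FreeMonoid.ofList w2)
            = natHom T w.1 := by
          rw [← map_mul, ← ofList_append, ← hw12, wl, ofList_toList]
        have hrel : natHom T (FreeMonoid.ofList w1) *
              (natHom T (FreeMonoid.ofList w2) * invElt T w * natHom T (FreeMonoid.ofList w1))
            = natHom T (FreeMonoid.ofList w1) := by
          calc natHom T (FreeMonoid.ofList w1) *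
                (natHom T (FreeMonoid.ofList w2) * invElt T w * natHom T (FreeMonoid.ofList w1))
              = (natHom T (FreeMonoid.ofList w1) * natHom T (FreeMonoid.ofList w2)) *
                  (invElt T w * natHom T (FreeMonoid.ofList w1)) := by
                rw [mul_assoc (natHom T (FreeMonoid.ofList w2)), ← mul_assoc]
            _ = (natHom T w.1 * invElt T w) * natHom T (FreeMonoid.ofList w1) := by
                rw [hnat, ← mul_assoc]
            _ = natHom T (FreeMonoid.ofList w1) := by rw [natHom_mul_invElt, one_mul]
        have hkey : mkW T (FreeMonoid.ofList a)
            = mkW T (FreeMonoid.ofList a) *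
              (natHom T (FreeMonoid.ofList w2) * invElt T w * natHom T (FreeMonoid.ofList w1)) := by
          conv_lhs => rw [hu1]
          rw [hu1, mul_assoc, hrel]
        have hz := unit_cancel ⟨U, hU⟩ hkey
        exact contra_word hT hne hw12 hw1ne hw2ne hz
    · -- r = ruleB w
      obtain ⟨w1, w2, hw12, hw2ne, hrr1, hrr2⟩ :=
        ruleB_split (show r1 ++ r2 = ruleB w by rw [← hr12, ← hw]) hr1ne hr2ne
      have hadec : a = p ++ (Sum.inr w :: embL T w1) := by rw [haeq, hrr1]
      have hu1 : mkW T (FreeMonoid.ofList a)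
          = mkW T (FreeMonoid.ofList p) * (invElt T w * natHom T (FreeMonoid.ofList w1)) := by
        rw [hadec, show (Sum.inr w :: embL T w1 : List (X ⊕ T)) = [Sum.inr w] ++ embL T w1 from rfl,
          ← List.append_assoc, ofList_append, ofList_append, map_mul, map_mul, ofList_embL,
          ofList_singleton, mul_assoc]
        rfl
      rcases eq_or_ne w1 [] with rfl | hw1ne
      · -- block case: a = p ++ [inr w]
        have hkey : mkW T (FreeMonoid.ofList p)
            = mkW T (FreeMonoid.ofList a) * natHom T w.1 := by
          rw [hu1, ofList_nil, map_one, mul_one, mul_assoc, invElt_mul_natHom, mul_one]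
        have hup : IsUnit (mkW T (FreeMonoid.ofList p)) := by
          rw [hkey, ← hU]
          exact (Units.isUnit U).mul (isUnit_natHom w)
        have hplen : p.length ≤ n := by
          have h7 := congrArg List.length hadec
          simp only [List.length_append, List.length_cons, embL, List.length_map] at h7
          omega
        have hmem := ih p hplen hpnorm hup
        rw [hu1, ofList_nil, map_one, mul_one]
        exact mul_mem hmem (Submonoid.subset_closure (Or.inr ⟨w, rfl⟩))
      · -- partial case: contradiction
        exfalso
        have hnat : natHom T (FreeMonoid.ofList w1) * natHom T (FreeMonoid.ofList w2)
            = natHom T w.1 := by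
          rw [← map_mul, ← ofList_append, ← hw12, wl, ofList_toList]
        have hrel : natHom T (FreeMonoid.ofList w1) *
              (natHom T (FreeMonoid.ofList w2) * invElt T w * natHom T (FreeMonoid.ofList w1))
            = natHom T (FreeMonoid.ofList w1) := by
          calc natHom T (FreeMonoid.ofList w1) *
                (natHom T (FreeMonoid.ofList w2) * invElt T w * natHom T (FreeMonoid.ofList w1))
              = (natHom T (FreeMonoid.ofList w1) * natHom T (FreeMonoid.ofList w2)) *
                  (invElt T w * natHom T (FreeMonoid.ofList w1)) := by
                rw [mul_assoc (natHom T (FreeMonoid.ofList w2)), ← mul_assoc]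
            _ = (natHom T w.1 * invElt T w) * natHom T (FreeMonoid.ofList w1) := by
                rw [hnat, ← mul_assoc]
            _ = natHom T (FreeMonoid.ofList w1) := by rw [natHom_mul_invElt, one_mul]
        have hrelB : (invElt T w * natHom T (FreeMonoid.ofList w1)) *
              (natHom T (FreeMonoid.ofList w2) * invElt T w * natHom T (FreeMonoid.ofList w1))
            = invElt T w * natHom T (FreeMonoid.ofList w1) := by
          rw [mul_assoc, hrel]
        have hkey : mkW T (FreeMonoid.ofList a)
            = mkW T (FreeMonoid.ofList a) *
              (natHom T (FreeMonoid.ofList w2) * invElt T w * natHom T (FreeMonoid.ofList w1)) := by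
          conv_lhs => rw [hu1]
          rw [hu1, mul_assoc, hrelB]
        have hz := unit_cancel ⟨U, hU⟩ hkey
        exact contra_word hT hne hw12 hw1ne hw2ne hz

end Aux

/-- an element of `⟨X : i(T)⟩` is invertible iff it lies in the submonoid
generated by the images of elements of `T` together with the elements `i(w)`, `w ∈ T`. -/
theorem stmt7 (X : Type*) (T : Set (FreeMonoid X))
    (h1 : (1 : FreeMonoid X) ∉ T) (hT : OverlapFree T) (u : AdjInv T) :
    IsUnit u ↔ u ∈ Submonoid.closure (natHom T '' T ∪ Set.range (invElt T)) := by
  have hne : ∀ w : T, wl w ≠ [] := by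
    intro w hcon
    apply h1
    have h2 := congrArg FreeMonoid.ofList hcon
    rw [wl, FreeMonoid.ofList_toList, FreeMonoid.ofList_nil] at h2
    rw [← h2]
    exact w.2
  constructor
  · intro hu
    obtain ⟨x, rfl⟩ := mkW_surjective (T := T) u
    rw [← mkW_nf hne x] at hu ⊢
    exact unit_mem hT hne _ _ le_rfl (scan_normal hne _ normal_nil) hu
  · intro hmem
    refine Submonoid.closure_induction ?_ ?_ ?_ hmem
    · rintro g (⟨w, hwT, rfl⟩ | ⟨w, rfl⟩)
      · exact ⟨⟨natHom T w, invElt T ⟨w, hwT⟩, natHom_mul_invElt ⟨w, hwT⟩,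
          invElt_mul_natHom ⟨w, hwT⟩⟩, rfl⟩
      · exact ⟨⟨invElt T w, natHom T w.1, invElt_mul_natHom w, natHom_mul_invElt w⟩, rfl⟩
    · exact isUnit_one
    · intro x y _ _ hx hy
      exact hx.mul hy

end AdjoinInverses
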